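/- If M is a comultiplication module, then every second submodule of M is strongly hollow. -/
import Mathlib


section Prelim

variable {R : Type*} [Ring R] {M : Type*} [AddCommGroup M] [Module R M]

/-- A left ideal of `R` is two-sided. -/
def IsTwoSidedIdeal (I : Ideal R) : Prop := ∀ r ∈ I, ∀ s : R, r * s ∈ I

/-- `M` is a coprime module: `IM = M` or `IM = 0` for every two-sided ideal `I`. -/
def IsCoprimeModule (R M : Type*) [Ring R] [AddCommGroup M] [Module R M] : Prop :=
  ∀ I : Ideal R, IsTwoSidedIdeal I →
    I • (⊤ : Submodule R M) = ⊤ ∨ I • (⊤ : Submodule R M) = ⊥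

/-- A proper submodule `K ⊊ M` is a coprime submodule of `M`:
`IM + K = M` or `IM ⊆ K` for every two-sided ideal `I`. -/
def IsCoprimeSubmodule (K : Submodule R M) : Prop :=
  K ≠ ⊤ ∧ ∀ I : Ideal R, IsTwoSidedIdeal I →
    I • (⊤ : Submodule R M) ⊔ K = ⊤ ∨ I • (⊤ : Submodule R M) ≤ K

/-- A nonzero submodule `K ≤ M` is second: `IK = K` or `IK = 0`
for every two-sided ideal `I`. -/
def IsSecondSubmodule (K : Submodule R M) : Prop :=
  K ≠ ⊥ ∧ ∀ I : Ideal R, IsTwoSidedIdeal I → I • K = K ∨ I • K = ⊥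

/-- The ideal `(K :_R M) = {r | r • M ⊆ K}`. -/
def colonIdeal (K : Submodule R M) : Ideal R where
  carrier := {r : R | ∀ m : M, r • m ∈ K}
  zero_mem' := by intro m; rw [zero_smul]; exact K.zero_mem
  add_mem' := by intro a b ha hb m; rw [add_smul]; exact K.add_mem (ha m) (hb m)
  smul_mem' := by intro s r hr m; rw [smul_eq_mul, mul_smul]; exact K.smul_mem s (hr m)

/-- The annihilator `(0 :_M I)` of a two-sided ideal `I` in `M`. -/
def annSubmodule (I : Ideal R) (hI : IsTwoSidedIdeal I) : Submodule R M where
  carrier := {m : M | ∀ r ∈ I, r • m = 0}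
  zero_mem' := by intro r _; exact smul_zero r
  add_mem' := by intro a b ha hb r hr; rw [smul_add, ha r hr, hb r hr, add_zero]
  smul_mem' := by intro s m hm r hr; rw [← mul_smul]; exact hm _ (hI r hr s)

/-- A nonzero submodule `K` is strongly hollow in `M`. -/
def StronglyHollowIn (K : Submodule R M) : Prop :=
  K ≠ ⊥ ∧ ∀ L₁ L₂ : Submodule R M, K ≤ L₁ ⊔ L₂ → K ≤ L₁ ∨ K ≤ L₂

/-- A proper submodule `K` is strongly irreducible in `M`. -/
def StronglyIrreducibleIn (K : Submodule R M) : Prop :=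
  K ≠ ⊤ ∧ ∀ L₁ L₂ : Submodule R M, L₁ ⊓ L₂ ≤ K → L₁ ≤ K ∨ L₂ ≤ K

/-- `V^s(L)`: the second submodules of `M` contained in `L`. -/
def secondVariety (L : Submodule R M) : Set (Submodule R M) :=
  {K | IsSecondSubmodule K ∧ K ≤ L}

/-- `V^c(L)`: the coprime submodules of `M` containing `L`. -/
def coprimeVariety (L : Submodule R M) : Set (Submodule R M) :=
  {K | IsCoprimeSubmodule K ∧ L ≤ K}

lemma IsTwoSidedIdeal.inf {I J : Ideal R} (hI : IsTwoSidedIdeal I)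
    (hJ : IsTwoSidedIdeal J) : IsTwoSidedIdeal (I ⊓ J) := by
  intro r hr s
  rw [Submodule.mem_inf] at hr ⊢
  exact ⟨hI r hr.1 s, hJ r hr.2 s⟩

lemma IsTwoSidedIdeal.mul {I J : Ideal R} (hJ : IsTwoSidedIdeal J) :
    IsTwoSidedIdeal (I * J) := by
  intro r hr s
  refine Submodule.smul_induction_on hr ?_ ?_
  · intro a ha b hb
    rw [smul_eq_mul, mul_assoc]
    exact Ideal.mul_mem_mul ha (hJ b hb s)
  · intro x y hx hy
    rw [add_mul]
    exact Ideal.add_mem _ hx hy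

end Prelim

section Aux

variable {R : Type*} [Ring R] {M : Type*} [AddCommGroup M] [Module R M]

/-- The annihilator ideal of a submodule. -/
def annIdeal' (L : Submodule R M) : Ideal R where
  carrier := {r : R | ∀ x ∈ L, r • x = 0}
  zero_mem' := by intro x _; rw [zero_smul]
  add_mem' := by intro a b ha hb x hx; rw [add_smul, ha x hx, hb x hx, add_zero]
  smul_mem' := by intro s r hr x hx; rw [smul_eq_mul, mul_smul, hr x hx, smul_zero]

lemma annIdeal'_twoSided (L : Submodule R M) : IsTwoSidedIdeal (annIdeal' L) := by
  intro r hr s x hx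
  rw [mul_smul]
  exact hr _ (L.smul_mem s hx)

lemma le_of_ann_smul_bot
    (hcomul : ∀ L : Submodule R M,
      (L : Set M) = {m : M | ∀ r : R, (∀ x ∈ L, r • x = 0) → r • m = 0})
    {K L : Submodule R M} (h : annIdeal' L • K = ⊥) : K ≤ L := by
  intro k hk
  have hmem : k ∈ {m : M | ∀ r : R, (∀ x ∈ L, r • x = 0) → r • m = 0} := by
    intro r hr
    have : r • k ∈ annIdeal' L • K :=
      Submodule.smul_mem_smul (show r ∈ annIdeal' L from hr) hk
    rw [h, Submodule.mem_bot] at this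
    exact this
  rw [← hcomul L] at hmem
  exact hmem

end Aux

/-- If `M` is a comultiplication module, then every second submodule
of `M` is strongly hollow. -/
theorem statement14 {R M : Type*} [Ring R] [AddCommGroup M] [Module R M]
    (hcomul : ∀ L : Submodule R M,
      (L : Set M) = {m : M | ∀ r : R, (∀ x ∈ L, r • x = 0) → r • m = 0}) :
    ∀ K : Submodule R M, IsSecondSubmodule K → StronglyHollowIn K := by
  rintro K ⟨hK0, hsec⟩
  refine ⟨hK0, ?_⟩
  intro L₁ L₂ hle
  rcases hsec (annIdeal' L₁) (annIdeal'_twoSided L₁) with h1 | h1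
  · -- annIdeal' L₁ • K = K : show annIdeal' L₂ • K = ⊥, hence K ≤ L₂
    right
    apply le_of_ann_smul_bot hcomul
    rw [eq_bot_iff]
    rw [Submodule.smul_le]
    intro r hr k hk
    rw [← h1] at hk
    refine Submodule.smul_induction_on hk ?_ ?_
    · intro s hs x hx
      rw [Submodule.mem_bot, smul_smul]
      obtain ⟨y, hy, z, hz, rfl⟩ := Submodule.mem_sup.mp (hle hx)
      rw [smul_add, mul_smul, hs y hy, smul_zero, zero_add, mul_smul]
      exact hr _ (L₂.smul_mem s hz)
    · intro a b ha hb
      rw [Submodule.mem_bot] at ha hb ⊢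
      rw [smul_add, ha, hb, add_zero]
  · -- annIdeal' L₁ • K = ⊥ : K ≤ L₁
    exact Or.inl (le_of_ann_smul_bot hcomul h1)
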